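/- Let Γ ⊂ ℝⁿ be a full-rank lattice, ℝⁿ = ℝᵏ ⊕ ℝⁿ⁻ᵏ with projections p, q, and let D ⊂ ℝⁿ⁻ᵏ be a bounded set with nonempty interior such that q(Γ) is dense in ℝⁿ⁻ᵏ. Then the model set p(Γ ∩ q⁻¹(D)) is relatively dense in ℝᵏ: there exists ρ₁ > 0 such that every point of ℝᵏ is within distance ρ₁ of a point of the model set. -/

import Mathlib

/- STATEMENT 5: Cut-and-project: relative density of the model set.
Γ is a full-rank lattice in ℝⁿ = ℝᵏ × ℝˡ (the ℤ-span of an ℝ-basis `b`),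
D ⊂ ℝˡ is a bounded window with nonempty interior, and q(Γ) is dense in ℝˡ.
Then the model set p(Γ ∩ q⁻¹(D)) is relatively dense in ℝᵏ. -/
theorem stmt_5 (k l : ℕ) (b : Module.Basis (Fin (k + l)) ℝ ((Fin k → ℝ) × (Fin l → ℝ)))
    (D : Set (Fin l → ℝ)) (hD : Bornology.IsBounded D)
    (hint : (interior D).Nonempty)
    (hdense : Dense {w : Fin l → ℝ | ∃ g ∈ Submodule.span ℤ (Set.range ⇑b), Prod.snd g = w}) :
    ∃ ρ₁ > (0 : ℝ), ∀ v : Fin k → ℝ,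
      ∃ g ∈ Submodule.span ℤ (Set.range ⇑b), g.2 ∈ D ∧ ‖g.1 - v‖ ≤ ρ₁ := by
  classical
  set Γ : Submodule ℤ ((Fin k → ℝ) × (Fin l → ℝ)) := Submodule.span ℤ (Set.range ⇑b) with hΓ
  -- Step 1: covering radius R
  have hcov : ∃ R > (0:ℝ), ∀ x : (Fin k → ℝ) × (Fin l → ℝ), ∃ g ∈ Γ, ‖x - g‖ ≤ R := by
    refine ⟨(∑ i, ‖b i‖) + 1, by positivity, fun x => ?_⟩
    set c : Fin (k+l) → ℝ := fun i => b.repr x i with hc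
    refine ⟨∑ i, (⌊c i⌋ : ℤ) • b i,
      Submodule.sum_mem _ fun i _ => Submodule.smul_mem _ _
        (Submodule.subset_span ⟨i, rfl⟩), ?_⟩
    have hx : x = ∑ i, c i • b i := by
      simpa [hc] using (b.sum_repr x).symm
    have hdiff : x - ∑ i, (⌊c i⌋ : ℤ) • b i = ∑ i, (c i - (⌊c i⌋ : ℝ)) • b i := by
      rw [hx, ← Finset.sum_sub_distrib]
      refine Finset.sum_congr rfl fun i _ => ?_
      rw [sub_smul, Int.cast_smul_eq_zsmul ℝ]
    rw [hdiff]
    calc ‖∑ i, (c i - (⌊c i⌋ : ℝ)) • b i‖ ≤ ∑ i, ‖(c i - (⌊c i⌋ : ℝ)) • b i‖ :=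
          norm_sum_le _ _
      _ ≤ ∑ i, ‖b i‖ := by
          refine Finset.sum_le_sum fun i _ => ?_
          rw [norm_smul]
          have h1 : |c i - (⌊c i⌋ : ℝ)| ≤ 1 := by
            have hf : c i - (⌊c i⌋ : ℝ) = Int.fract (c i) := (Int.self_sub_floor _)
            rw [hf, abs_of_nonneg (Int.fract_nonneg (c i))]
            exact le_of_lt (Int.fract_lt_one (c i))
          calc ‖c i - (⌊c i⌋ : ℝ)‖ * ‖b i‖ ≤ 1 * ‖b i‖ := by
                apply mul_le_mul_of_nonneg_right _ (norm_nonneg _)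
                simpa [Real.norm_eq_abs] using h1
            _ = ‖b i‖ := one_mul _
      _ ≤ (∑ i, ‖b i‖) + 1 := le_add_of_nonneg_right zero_le_one
  obtain ⟨R, hR0, hR⟩ := hcov
  -- Step 2: ball inside D
  obtain ⟨w₀, hw₀⟩ := hint
  obtain ⟨ε, hε0, hball⟩ := Metric.isOpen_iff.1 isOpen_interior w₀ hw₀
  have hballD : Metric.ball w₀ ε ⊆ D := hball.trans interior_subset
  -- Step 3: finite ε-net of closedBall 0 R from density of q(Γ)
  have hKcover : Metric.closedBall (0 : Fin l → ℝ) R ⊆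
      ⋃ γ : Γ, Metric.ball ((γ : (Fin k → ℝ) × (Fin l → ℝ)).2) ε := by
    intro u _
    have := Metric.mem_closure_iff.1 (hdense u) ε hε0
    obtain ⟨w, hw, hdw⟩ := this
    obtain ⟨g, hgΓ, hgw⟩ := hw
    refine Set.mem_iUnion.2 ⟨⟨g, hgΓ⟩, ?_⟩
    simp only [Metric.mem_ball]
    simpa [hgw, dist_comm] using hdw
  obtain ⟨t, ht⟩ := (isCompact_closedBall (0 : Fin l → ℝ) R).elim_finite_subcover
    (fun γ : Γ => Metric.ball ((γ : (Fin k → ℝ) × (Fin l → ℝ)).2) ε)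
    (fun γ => Metric.isOpen_ball) hKcover
  set C : ℝ := ∑ γ ∈ t, ‖(γ : (Fin k → ℝ) × (Fin l → ℝ)).1‖ with hC
  have hC0 : 0 ≤ C := Finset.sum_nonneg fun _ _ => norm_nonneg _
  have hCle : ∀ γ ∈ t, ‖(γ : (Fin k → ℝ) × (Fin l → ℝ)).1‖ ≤ C := fun γ hγ =>
    Finset.single_le_sum (f := fun γ : Γ => ‖(γ : (Fin k → ℝ) × (Fin l → ℝ)).1‖) (fun _ _ => norm_nonneg _) hγ
  refine ⟨R + C, by linarith, fun v => ?_⟩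
  -- Step 4: given v, approximate (v, w₀) and correct
  obtain ⟨g₀, hg₀Γ, hg₀⟩ := hR (v, w₀)
  have hsnd : w₀ - g₀.2 ∈ Metric.closedBall (0 : Fin l → ℝ) R := by
    rw [Metric.mem_closedBall, dist_zero_right]
    calc ‖w₀ - g₀.2‖ = ‖((v, w₀) - g₀).2‖ := by simp
      _ ≤ ‖(v, w₀) - g₀‖ := norm_snd_le _
      _ ≤ R := hg₀
  obtain ⟨γ, hγt, hγ⟩ := Set.mem_iUnion₂.1 (ht hsnd)
  have hγball : ‖(w₀ - g₀.2) - (γ : (Fin k → ℝ) × (Fin l → ℝ)).2‖ < ε := by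
    rw [← dist_eq_norm]
    exact Metric.mem_ball.1 hγ
  refine ⟨g₀ + (γ : (Fin k → ℝ) × (Fin l → ℝ)), Submodule.add_mem _ hg₀Γ γ.2, ?_, ?_⟩
  · apply hballD
    rw [Metric.mem_ball, dist_eq_norm]
    have : (g₀ + (γ : (Fin k → ℝ) × (Fin l → ℝ))).2 - w₀
        = -((w₀ - g₀.2) - (γ : (Fin k → ℝ) × (Fin l → ℝ)).2) := by
      simp [Prod.snd_add]; abel
    rw [this, norm_neg]
    exact hγball
  · have h1 : ‖g₀.1 - v‖ ≤ R := by
      calc ‖g₀.1 - v‖ = ‖((v, w₀) - g₀).1‖ := by rw [← norm_neg]; simp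
        _ ≤ ‖(v, w₀) - g₀‖ := norm_fst_le _
        _ ≤ R := hg₀
    calc ‖(g₀ + (γ : (Fin k → ℝ) × (Fin l → ℝ))).1 - v‖
        = ‖(g₀.1 - v) + (γ : (Fin k → ℝ) × (Fin l → ℝ)).1‖ := by
          rw [Prod.fst_add]; ring_nf
      _ ≤ ‖g₀.1 - v‖ + ‖(γ : (Fin k → ℝ) × (Fin l → ℝ)).1‖ := norm_add_le _ _
      _ ≤ R + C := add_le_add h1 (hCle γ hγt)
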